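/- Let p ∈ (0,1], let N ≥ 2 be an integer, and let X_1, …, X_N be independent random variables with P[X_k = 1] = p and P[X_k = 0] = 1 − p. Then with probability at least 1 − 2·N^{−16}, for all indices 1 ≤ i ≤ j ≤ N one has |∑_{k=i}^{j} X_k − p·(j − i + 1)| ≤ 3·√(N · ln N). -/

import Mathlib

open MeasureTheory

open Real Finset

/-- Hoeffding's lemma for a Bernoulli(p) variable. -/
lemma bernoulli_mgf_le (p : ℝ) (hp0 : 0 ≤ p) (hp1 : p ≤ 1) (l : ℝ) :
    p * Real.exp (l * (1 - p)) + (1 - p) * Real.exp (l * (0 - p)) ≤ Real.exp (l ^ 2 / 8) := by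
  set q : ℝ := 1 - p with hq
  have hq0 : 0 ≤ q := by simp [hq]; linarith
  set D : ℝ → ℝ := fun x => q + p * Real.exp x with hD
  have hDpos : ∀ x, 0 < D x := by
    intro x
    rcases lt_or_eq_of_le hp0 with h | h
    · have := Real.exp_pos x; positivity
    · simp [hD, ← h, hq]
  set ψ : ℝ → ℝ := fun x => p + x / 4 - p * Real.exp x / D x with hψdef
  set φ : ℝ → ℝ := fun x => p * x + x ^ 2 / 8 - Real.log (D x) with hφdef
  have hDderiv : ∀ x, HasDerivAt D (p * Real.exp x) x := fun x =>
    ((Real.hasDerivAt_exp x).const_mul p).const_add q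
  have hφderiv : ∀ x, HasDerivAt φ (ψ x) x := by
    intro x
    have h1 : HasDerivAt (fun x : ℝ => p * x + x ^ 2 / 8) (p + x / 4) x := by
      have := ((hasDerivAt_id x).const_mul p).add ((hasDerivAt_pow 2 x).div_const 8)
      exact this.congr_deriv (by rw [show (2:ℕ) - 1 = 1 from rfl]; push_cast; ring)
    have h2 : HasDerivAt (fun x => Real.log (D x)) (p * Real.exp x / D x) x :=
      (hDderiv x).log (hDpos x).ne'
    exact h1.sub h2
  have hψderiv : ∀ x, HasDerivAt ψ
      (1 / 4 - (p * Real.exp x * D x - p * Real.exp x * (p * Real.exp x)) / (D x) ^ 2) x := by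
    intro x
    have h1 : HasDerivAt (fun x : ℝ => p + x / 4) (1 / 4) x :=
      ((hasDerivAt_id x).div_const 4).const_add p
    have h2 := ((Real.hasDerivAt_exp x).const_mul p).div (hDderiv x) (hDpos x).ne'
    exact h1.sub h2
  have hψnonneg : ∀ x, 0 ≤ 1 / 4 -
      (p * Real.exp x * D x - p * Real.exp x * (p * Real.exp x)) / (D x) ^ 2 := by
    intro x
    have hx := Real.exp_pos x
    have hDx := hDpos x
    have key : (p * Real.exp x * D x - p * Real.exp x * (p * Real.exp x)) / (D x) ^ 2 ≤ 1 / 4 := by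
      rw [div_le_iff₀ (by positivity)]
      have hDexp : D x = q + p * Real.exp x := rfl
      nlinarith [sq_nonneg (q - p * Real.exp x)]
    linarith
  have hψmono : Monotone ψ := by
    apply monotone_of_deriv_nonneg (fun x => (hψderiv x).differentiableAt)
    intro x
    rw [(hψderiv x).deriv]
    exact hψnonneg x
  have hψ0 : ψ 0 = 0 := by
    simp [hψdef, hD, Real.exp_zero, hq]
  have hφ0 : φ 0 = 0 := by
    simp [hφdef, hD, Real.exp_zero, hq]
  have hφnonneg : ∀ x, 0 ≤ φ x := by
    intro x
    rcases le_total 0 x with hx | hx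
    · have hmono : MonotoneOn φ (Set.Ici (0 : ℝ)) := by
        apply monotoneOn_of_deriv_nonneg (convex_Ici 0)
          (Continuous.continuousOn (Differentiable.continuous (fun y => (hφderiv y).differentiableAt)))
        · intro y _
          exact (hφderiv y).differentiableAt.differentiableWithinAt
        · intro y hy
          rw [(hφderiv y).deriv]
          rw [interior_Ici] at hy
          have := hψmono (le_of_lt hy)
          rw [hψ0] at this
          exact this
      have := hmono (Set.self_mem_Ici) (Set.mem_Ici.mpr hx) hx
      rw [hφ0] at this
      exact this
    · have hmono : AntitoneOn φ (Set.Iic (0 : ℝ)) := by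
        apply antitoneOn_of_deriv_nonpos (convex_Iic 0)
          (Continuous.continuousOn (Differentiable.continuous (fun y => (hφderiv y).differentiableAt)))
        · intro y _
          exact (hφderiv y).differentiableAt.differentiableWithinAt
        · intro y hy
          rw [(hφderiv y).deriv]
          rw [interior_Iic] at hy
          have := hψmono (le_of_lt hy)
          rw [hψ0] at this
          linarith
      have := hmono (Set.mem_Iic.mpr hx) (Set.self_mem_Iic) hx
      rw [hφ0] at this
      exact this
  have hkey : D l ≤ Real.exp (p * l + l ^ 2 / 8) := by
    have h := hφnonneg l
    have : Real.log (D l) ≤ p * l + l ^ 2 / 8 := by simp [hφdef] at h; linarith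
    calc D l = Real.exp (Real.log (D l)) := (Real.exp_log (hDpos l)).symm
    _ ≤ _ := Real.exp_le_exp.mpr this
  have hfact : p * Real.exp (l * (1 - p)) + (1 - p) * Real.exp (l * (0 - p))
      = Real.exp (-(l * p)) * D l := by
    rw [show l * (1 - p) = -(l * p) + l by ring, show l * (0 - p) = -(l * p) by ring,
      Real.exp_add]
    simp only [hD, hq]
    ring
  rw [hfact]
  calc Real.exp (-(l * p)) * D l ≤ Real.exp (-(l * p)) * Real.exp (p * l + l ^ 2 / 8) :=
        mul_le_mul_of_nonneg_left hkey (Real.exp_nonneg _)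
  _ = Real.exp (l ^ 2 / 8) := by rw [← Real.exp_add]; ring_nf

/-- Chernoff bound for one tail of a sum of independent Bernoulli indicators,
    expressed as a finite weighted sum. -/
lemma chernoff_side(p : ℝ) (hp0 : 0 < p) (hp1 : p ≤ 1) {N : ℕ} (s : Finset (Fin N))
    (c t l : ℝ) (hc : c ^ 2 = 1) (hl : 0 ≤ l) :
    ∑ ω ∈ Finset.univ.filter (fun ω : Fin N → Bool =>
        t ≤ c * ((∑ k ∈ s, if ω k then (1 : ℝ) else 0) - p * s.card)),
      (∏ k, if ω k then p else 1 - p)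
    ≤ Real.exp (s.card * l ^ 2 / 8 - l * t) := by
  classical
  set w : Bool → ℝ := fun b => if b then p else 1 - p with hw
  have hw0 : ∀ b, 0 ≤ w b := by intro b; cases b <;> simp [hw] <;> linarith
  set S : (Fin N → Bool) → ℝ := fun ω => ∑ k ∈ s, if ω k then (1 : ℝ) else 0 with hS
  set g : Fin N → Bool → ℝ := fun k b =>
    w b * (if k ∈ s then Real.exp (l * c * ((if b then (1 : ℝ) else 0) - p)) else 1) with hg
  have hg0 : ∀ k b, 0 ≤ g k b := fun k b => by
    apply mul_nonneg (hw0 b); split <;> positivity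
  have stepA : ∀ ω : Fin N → Bool,
      (∏ k, g k (ω k)) = (∏ k, w (ω k)) * Real.exp (l * c * (S ω - p * s.card)) := by
    intro ω
    rw [Finset.prod_mul_distrib]
    congr 1
    rw [Finset.prod_ite_mem Finset.univ s, Finset.univ_inter, ← Real.exp_sum]
    congr 1
    rw [← Finset.mul_sum, Finset.sum_sub_distrib, Finset.sum_const, nsmul_eq_mul]
    simp only [hS]
    ring
  calc
    ∑ ω ∈ Finset.univ.filter (fun ω : Fin N → Bool =>
          t ≤ c * ((∑ k ∈ s, if ω k then (1 : ℝ) else 0) - p * s.card)),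
        (∏ k, if ω k then p else 1 - p)
      ≤ ∑ ω ∈ Finset.univ.filter (fun ω : Fin N → Bool =>
          t ≤ c * ((∑ k ∈ s, if ω k then (1 : ℝ) else 0) - p * s.card)),
        (∏ k, w (ω k)) * Real.exp (l * (c * (S ω - p * s.card) - t)) := by
        apply Finset.sum_le_sum
        intro ω hω
        rw [Finset.mem_filter] at hω
        have h1 : (0 : ℝ) ≤ l * (c * (S ω - p * s.card) - t) :=
          mul_nonneg hl (by simpa [hS] using sub_nonneg.mpr hω.2)
        have h2 : (1 : ℝ) ≤ Real.exp (l * (c * (S ω - p * s.card) - t)) :=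
          Real.one_le_exp h1
        have h3 : 0 ≤ ∏ k, w (ω k) := Finset.prod_nonneg fun k _ => hw0 _
        calc (∏ k, if ω k then p else 1 - p) = ∏ k, w (ω k) := rfl
        _ ≤ _ := le_mul_of_one_le_right h3 h2
    _ ≤ ∑ ω : Fin N → Bool,
        (∏ k, w (ω k)) * Real.exp (l * (c * (S ω - p * s.card) - t)) := by
        apply Finset.sum_le_sum_of_subset_of_nonneg (Finset.filter_subset _ _)
        intro ω _ _
        exact mul_nonneg (Finset.prod_nonneg fun k _ => hw0 _) (Real.exp_nonneg _)
    _ = Real.exp (-(l * t)) * ∑ ω : Fin N → Bool, ∏ k, g k (ω k) := by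
        rw [Finset.mul_sum]
        apply Finset.sum_congr rfl
        intro ω _
        rw [stepA ω, ← mul_assoc, mul_comm (Real.exp (-(l * t))), mul_assoc, ← Real.exp_add]
        congr 1
        ring
    _ = Real.exp (-(l * t)) * ∏ k, ∑ b, g k b := by
        congr 1
        rw [Finset.prod_univ_sum, Fintype.piFinset_univ]
    _ ≤ Real.exp (-(l * t)) * ∏ k : Fin N, (if k ∈ s then Real.exp (l ^ 2 / 8) else 1) := by
        apply mul_le_mul_of_nonneg_left _ (Real.exp_nonneg _)
        apply Finset.prod_le_prod
        · intro k _
          exact Finset.sum_nonneg fun b _ => hg0 k b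
        · intro k _
          rw [Fintype.sum_bool]
          by_cases hk : k ∈ s
          · simp only [hg, hw, hk, if_true]
            have := bernoulli_mgf_le p hp0.le hp1 (l * c)
            have hlc : (l * c) ^ 2 = l ^ 2 := by rw [mul_pow, hc, mul_one]
            rw [hlc] at this
            simpa using this
          · simp only [hg, hw, hk, if_false]
            simp
    _ = Real.exp ((s.card : ℝ) * l ^ 2 / 8 - l * t) := by
        rw [Finset.prod_ite_mem Finset.univ s, Finset.univ_inter, Finset.prod_const,
          ← Real.exp_nat_mul, ← Real.exp_add]
        congr 1
        ring

lemma interval_bad_le(p : ℝ) (hp0 : 0 < p) (hp1 : p ≤ 1) {N : ℕ} (hN : 2 ≤ N)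
    (s : Finset (Fin N)) (c : ℝ) (hc : c ^ 2 = 1) :
    ∑ ω ∈ Finset.univ.filter (fun ω : Fin N → Bool =>
        3 * Real.sqrt (N * Real.log N) ≤
          c * ((∑ k ∈ s, if ω k then (1 : ℝ) else 0) - p * s.card)),
      (∏ k, if ω k then p else 1 - p)
    ≤ 1 / (N : ℝ) ^ 18 := by
  classical
  have hN1 : (1 : ℝ) < N := by exact_mod_cast hN.trans_lt' one_lt_two
  have hNpos : (0 : ℝ) < N := by linarith
  have hlogN : 0 < Real.log N := Real.log_pos hN1
  set t : ℝ := 3 * Real.sqrt (N * Real.log N) with ht_def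
  have ht : 0 < t := by
    have : 0 < Real.sqrt (N * Real.log N) := Real.sqrt_pos.mpr (by positivity)
    positivity
  have ht2 : t ^ 2 = 9 * (N * Real.log N) := by
    rw [ht_def, mul_pow, Real.sq_sqrt (by positivity)]
    norm_num
  rcases Nat.eq_zero_or_pos s.card with h0 | hpos
  · rw [Finset.card_eq_zero] at h0
    subst h0
    have : Finset.univ.filter (fun ω : Fin N → Bool =>
        t ≤ c * ((∑ k ∈ (∅ : Finset (Fin N)), if ω k then (1 : ℝ) else 0) - p * (0 : ℕ))) = ∅ := by
      apply Finset.filter_false_of_mem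
      intro ω _
      simp only [Finset.sum_empty, Nat.cast_zero, mul_zero, sub_zero]
      push_neg
      linarith
    simp only [Finset.card_empty] at this ⊢
    refine (Finset.sum_congr this (fun _ _ => rfl)).trans_le ?_
    rw [Finset.sum_empty]
    positivity
  · set n : ℕ := s.card with hn
    have hnpos : (0 : ℝ) < n := by exact_mod_cast hpos
    set l : ℝ := 4 * t / n with hl_def
    have hl : 0 ≤ l := by positivity
    refine (chernoff_side p hp0 hp1 s c t l hc hl).trans ?_
    have harg : (n : ℝ) * l ^ 2 / 8 - l * t = -(2 * t ^ 2 / n) := by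
      rw [hl_def]
      field_simp
      ring
    rw [harg]
    have hn_le : (n : ℝ) ≤ N := by
      have h : s.card ≤ N := by simpa using Finset.card_le_univ s
      exact_mod_cast h
    have h1 : 18 * Real.log N ≤ 2 * t ^ 2 / n := by
      rw [ht2, le_div_iff₀ hnpos]
      nlinarith
    have h2 : Real.exp (18 * Real.log N) = (N : ℝ) ^ (18 : ℕ) := by
      rw [show (18 : ℝ) * Real.log N = ((18 : ℕ) : ℝ) * Real.log N by norm_num,
        Real.exp_nat_mul, Real.exp_log hNpos]
    calc Real.exp (-(2 * t ^ 2 / n)) ≤ Real.exp (-(18 * Real.log N)) :=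
          Real.exp_le_exp.mpr (by linarith)
    _ = 1 / (N : ℝ) ^ 18 := by rw [Real.exp_neg, h2, one_div]

lemma measure_pi_bernoulli (p : ℝ) (hp0 : 0 ≤ p) (hp1 : p ≤ 1) {N : ℕ}
    (Sset : Set (Fin N → Bool)) [DecidablePred (· ∈ Sset)] :
    (Measure.pi fun _ : Fin N =>
        (PMF.bernoulli (Real.toNNReal p) (Real.toNNReal_le_one.mpr hp1)).toMeasure) Sset
      = ENNReal.ofReal (∑ ω ∈ Finset.univ.filter (· ∈ Sset),
          ∏ k, if ω k then p else 1 - p) := by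
  classical
  set μ := (Measure.pi fun _ : Fin N =>
      (PMF.bernoulli (Real.toNNReal p) (Real.toNNReal_le_one.mpr hp1)).toMeasure) with hμ
  have hb : ∀ b : Bool,
      (PMF.bernoulli (Real.toNNReal p) (Real.toNNReal_le_one.mpr hp1)).toMeasure {b}
        = ENNReal.ofReal (if b then p else 1 - p) := by
    intro b
    rw [PMF.toMeasure_apply_singleton _ _ (measurableSet_singleton b)]
    cases b
    · simp [PMF.bernoulli_apply]
      rw [← ENNReal.ofReal_one, ENNReal.ofReal_sub _ hp0]
      rfl
    · simp [PMF.bernoulli_apply]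
      rfl
  have hsingle : ∀ ω : Fin N → Bool,
      μ {ω} = ENNReal.ofReal (∏ k, if ω k then p else 1 - p) := by
    intro ω
    rw [← Set.univ_pi_singleton ω, hμ, Measure.pi_pi]
    rw [ENNReal.ofReal_prod_of_nonneg (fun k _ => by split <;> linarith)]
    exact Finset.prod_congr rfl fun k _ => hb (ω k)
  have hdecomp : Sset = ⋃ ω ∈ (Finset.univ.filter (· ∈ Sset) : Finset (Fin N → Bool)),
      ({ω} : Set (Fin N → Bool)) := by
    ext x; simp
  have hstep := congrArg μ hdecomp
  rw [hstep, measure_biUnion_finset ?_ (fun ω _ => measurableSet_singleton ω)]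
  · rw [ENNReal.ofReal_sum_of_nonneg
      (fun ω _ => Finset.prod_nonneg fun k _ => by split <;> linarith)]
    exact Finset.sum_congr rfl fun ω _ => hsingle ω
  · intro a _ b _ hab
    exact Set.disjoint_singleton.mpr hab

lemma sum_union_le_add{α : Type*} [DecidableEq α] (f : α → ℝ) (hf : ∀ a, 0 ≤ f a)
    (A B : Finset α) : ∑ x ∈ A ∪ B, f x ≤ ∑ x ∈ A, f x + ∑ x ∈ B, f x := by
  rw [← Finset.union_sdiff_self_eq_union, Finset.sum_union Finset.disjoint_sdiff]
  exact add_le_add le_rfl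
    (Finset.sum_le_sum_of_subset_of_nonneg Finset.sdiff_subset (fun x _ _ => hf x))

lemma sum_biUnion_le_sum_sum {ι α : Type*} [DecidableEq α] (f : α → ℝ) (hf : ∀ a, 0 ≤ f a)
    (s : Finset ι) (t : ι → Finset α) :
    ∑ x ∈ s.biUnion t, f x ≤ ∑ i ∈ s, ∑ x ∈ t i, f x := by
  classical
  induction s using Finset.induction_on with
  | empty => simp
  | @insert a s ha ih =>
    rw [Finset.biUnion_insert, Finset.sum_insert ha]
    calc ∑ x ∈ t a ∪ s.biUnion t, f x ≤ ∑ x ∈ t a, f x + ∑ x ∈ s.biUnion t, f x :=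
          sum_union_le_add f hf _ _
    _ ≤ _ := by linarith

/-- Claim 5.1 of the paper: for independent Bernoulli(`p`) indicators
`X_1, …, X_N` (modelled by the product Bernoulli measure on `Fin N → Bool`),
with probability at least `1 − 2N^{−16}`, every interval sum satisfies
`|∑_{k=i}^j X_k − p(j − i + 1)| ≤ 3√(N ln N)`. -/
theorem interval_sums_concentrate (p : ℝ) (hp0 : 0 < p) (hp1 : p ≤ 1)
    (N : ℕ) (hN : 2 ≤ N) :
    ENNReal.ofReal (1 - 2 / (N : ℝ) ^ 16) ≤
      (Measure.pi fun _ : Fin N =>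
          (PMF.bernoulli (Real.toNNReal p) (Real.toNNReal_le_one.mpr hp1)).toMeasure)
        {ω : Fin N → Bool | ∀ i j : Fin N, i ≤ j →
          |(∑ k ∈ Finset.Icc i j, (if ω k then (1 : ℝ) else 0)) -
              p * ((j.val : ℝ) - (i.val : ℝ) + 1)| ≤
            3 * Real.sqrt (N * Real.log N)} := by
  classical
  have hNpos : (0 : ℝ) < N := by
    have : 0 < N := by omega
    exact_mod_cast this
  set G : Set (Fin N → Bool) := {ω : Fin N → Bool | ∀ i j : Fin N, i ≤ j →
    |(∑ k ∈ Finset.Icc i j, (if ω k then (1 : ℝ) else 0)) -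
        p * ((j.val : ℝ) - (i.val : ℝ) + 1)| ≤
      3 * Real.sqrt (N * Real.log N)} with hG
  rw [measure_pi_bernoulli p hp0.le hp1 G]
  apply ENNReal.ofReal_le_ofReal
  set W : (Fin N → Bool) → ℝ := fun ω => ∏ k, if ω k then p else 1 - p with hWdef
  have hW0 : ∀ ω, 0 ≤ W ω := by
    intro ω
    simp only [hWdef]
    apply Finset.prod_nonneg
    intro k _
    by_cases h : ω k <;> simp [h] <;> linarith
  have hsum1 : ∑ ω : Fin N → Bool, W ω = 1 := by
    calc ∑ ω : Fin N → Bool, W ω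
        = ∑ ω ∈ Fintype.piFinset (fun _ : Fin N => (Finset.univ : Finset Bool)),
            ∏ k, (if ω k then p else 1 - p) := by rw [Fintype.piFinset_univ]
      _ = ∏ k : Fin N, ∑ b : Bool, (if b then p else 1 - p) :=
          (Finset.prod_univ_sum (fun _ : Fin N => (Finset.univ : Finset Bool))
            (fun _ b => if b then p else 1 - p)).symm
      _ = ∏ k : Fin N, (1 : ℝ) := Finset.prod_congr rfl (fun k _ => by
            rw [Fintype.sum_bool]; norm_num)
      _ = 1 := Finset.prod_const_one
  have hsplit := Finset.sum_filter_add_sum_filter_not Finset.univ (· ∈ G) W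
  suffices hbad : ∑ ω ∈ Finset.univ.filter (fun ω => ¬ ω ∈ G), W ω ≤ 2 / (N : ℝ) ^ 16 by
    have h1 : ∑ ω ∈ Finset.univ.filter (· ∈ G), W ω
        + ∑ ω ∈ Finset.univ.filter (fun ω => ¬ ω ∈ G), W ω = 1 := by
      rw [hsplit]; exact hsum1
    linarith
  set A : Fin N × Fin N → Finset (Fin N → Bool) := fun ij =>
    Finset.univ.filter (fun ω : Fin N → Bool =>
      3 * Real.sqrt (N * Real.log N) ≤
        1 * ((∑ k ∈ Finset.Icc ij.1 ij.2, if ω k then (1 : ℝ) else 0)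
          - p * (Finset.Icc ij.1 ij.2).card)) with hA
  set B : Fin N × Fin N → Finset (Fin N → Bool) := fun ij =>
    Finset.univ.filter (fun ω : Fin N → Bool =>
      3 * Real.sqrt (N * Real.log N) ≤
        (-1) * ((∑ k ∈ Finset.Icc ij.1 ij.2, if ω k then (1 : ℝ) else 0)
          - p * (Finset.Icc ij.1 ij.2).card)) with hB
  have hsubset : Finset.univ.filter (fun ω => ¬ ω ∈ G)
      ⊆ Finset.univ.biUnion (fun ij => A ij ∪ B ij) := by
    intro ω hω
    rw [Finset.mem_filter] at hω
    have hω' := hω.2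
    rw [hG, Set.mem_setOf_eq] at hω'
    push_neg at hω'
    obtain ⟨i, j, hij, habs⟩ := hω'
    rw [Finset.mem_biUnion]
    refine ⟨(i, j), Finset.mem_univ _, ?_⟩
    have hcard : (((Finset.Icc i j).card : ℕ) : ℝ) = (j.val : ℝ) - (i.val : ℝ) + 1 := by
      rw [Fin.card_Icc]
      have hij' : i.val ≤ j.val + 1 := Nat.le_succ_of_le (Fin.le_def.mp hij)
      rw [Nat.cast_sub hij']
      push_cast
      ring
    rw [Finset.mem_union]
    rcases lt_abs.mp habs with h | h
    · left
      simp only [hA, Finset.mem_filter]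
      refine ⟨Finset.mem_univ _, ?_⟩
      rw [one_mul, hcard]
      linarith
    · right
      simp only [hB, Finset.mem_filter]
      refine ⟨Finset.mem_univ _, ?_⟩
      rw [hcard]
      linarith
  calc ∑ ω ∈ Finset.univ.filter (fun ω => ¬ ω ∈ G), W ω
      ≤ ∑ ω ∈ Finset.univ.biUnion (fun ij => A ij ∪ B ij), W ω :=
        Finset.sum_le_sum_of_subset_of_nonneg hsubset (fun ω _ _ => hW0 ω)
    _ ≤ ∑ ij : Fin N × Fin N, ∑ ω ∈ A ij ∪ B ij, W ω :=
        sum_biUnion_le_sum_sum W hW0 _ _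
    _ ≤ ∑ _ij : Fin N × Fin N, (1 / (N : ℝ) ^ 18 + 1 / (N : ℝ) ^ 18) := by
        apply Finset.sum_le_sum
        intro ij _
        refine (sum_union_le_add W hW0 _ _).trans ?_
        exact add_le_add
          (interval_bad_le p hp0 hp1 hN (Finset.Icc ij.1 ij.2) 1 (by norm_num))
          (interval_bad_le p hp0 hp1 hN (Finset.Icc ij.1 ij.2) (-1) (by norm_num))
    _ = (N * N : ℕ) * (1 / (N : ℝ) ^ 18 + 1 / (N : ℝ) ^ 18) := by
        rw [Finset.sum_const, Finset.card_univ, nsmul_eq_mul]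
        norm_num [Fintype.card_prod, Fintype.card_fin]
    _ ≤ 2 / (N : ℝ) ^ 16 := by
        have hne : (N : ℝ) ≠ 0 := ne_of_gt hNpos
        apply le_of_eq
        push_cast
        field_simp
        ring
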